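/- Let G be a finite p-group of nilpotency class 2 with cyclic commutator subgroup γ₂(G). Then every class-preserving automorphism of G is inner, and |Inn(G)| = |G/Z(G)| equals |Hom(G/Z(G), γ₂(G))| whenever additionally Z(G) = γ₂(G) and G/Z(G) is homocyclic of exponent equal to that of γ₂(G). -/

import Mathlib

/-- In a finite cyclic group, `x` lies in the cyclic subgroup generated by `g`
whenever the order of `x` divides the order of `g`. -/
lemma aux_mem_zpowers_of_orderOf_dvd {C : Type*} [Group C] [Finite C] (hc : IsCyclic C)
    {g x : C} (h : orderOf x ∣ orderOf g) : x ∈ Subgroup.zpowers g := by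
  obtain ⟨γ, hγ⟩ := hc.exists_generator
  have hfin : ∀ c : C, IsOfFinOrder c := fun c => isOfFinOrder_of_finite c
  obtain ⟨k, hk⟩ := (Submonoid.mem_powers_iff g γ).mp
    ((hfin γ).mem_powers_iff_mem_zpowers.mpr (hγ g))
  obtain ⟨s, hs⟩ := (Submonoid.mem_powers_iff x γ).mp
    ((hfin γ).mem_powers_iff_mem_zpowers.mpr (hγ x))
  set N := orderOf γ with hNdef
  have hNpos : 0 < N := (hfin γ).orderOf_pos
  set d := Nat.gcd N k with hddef
  have hdN : d ∣ N := Nat.gcd_dvd_left N k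
  have hdpos : 0 < d := Nat.gcd_pos_of_pos_left k hNpos
  have hog : orderOf g = N / d := by rw [← hk, orderOf_pow]
  have hxs : γ ^ (s * (N / d)) = 1 := by
    rw [pow_mul, hs]
    exact orderOf_dvd_iff_pow_eq_one.mp (hog ▸ h)
  have hNdvd : N ∣ s * (N / d) := orderOf_dvd_iff_pow_eq_one.mpr hxs
  have hD : d ∣ s := by
    have h1 : d * (N / d) ∣ s * (N / d) := by rwa [Nat.mul_div_cancel' hdN]
    have h2 : 0 < N / d := Nat.div_pos (Nat.le_of_dvd hNpos hdN) hdpos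
    exact (Nat.mul_dvd_mul_iff_right h2).mp h1
  obtain ⟨e, he⟩ := hD
  have hbez : (d : ℤ) = N * Nat.gcdA N k + k * Nat.gcdB N k := Nat.gcd_eq_gcd_ab N k
  have hγd : γ ^ (d : ℤ) = g ^ Nat.gcdB N k := by
    rw [hbez, zpow_add, zpow_mul, zpow_mul, zpow_natCast, zpow_natCast, pow_orderOf_eq_one,
      hk, one_zpow, one_mul]
  rw [Subgroup.mem_zpowers_iff]
  refine ⟨Nat.gcdB N k * (e : ℤ), ?_⟩
  rw [zpow_mul, ← hγd, ← zpow_mul, ← hs, he]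
  rw [← zpow_natCast γ (d * e)]
  norm_num

lemma aux_key {V C : Type*} [Group V] [Finite V] [CommGroup C] [Finite C] {p : ℕ}
    (hp : p.Prime) (hC : IsPGroup p C) (hcyc : IsCyclic C)
    (B : V → V →* C) (hB : ∀ x y z : V, B (x * y) z = B x z * B y z)
    (halt : ∀ x : V, B x x = 1) :
    ∀ (n : ℕ) (S : Subgroup V), Nat.card S ≤ n → ∀ f : V →* C,
      (∀ v ∈ S, ∃ u ∈ S, f v = B v u) → ∃ w ∈ S, ∀ v ∈ S, f v = B v w := by
  have hB1 : ∀ z : V, B 1 z = 1 := by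
    intro z
    have h := hB 1 1 z
    rw [one_mul] at h
    exact (mul_eq_left.mp h.symm)
  -- `B` bundled as a homomorphism in the first variable
  let Bl : V → V →* C := fun z =>
    { toFun := fun x => B x z
      map_one' := hB1 z
      map_mul' := fun a b => hB a b z }
  have hBl : ∀ x z : V, Bl z x = B x z := fun _ _ => rfl
  have hskew : ∀ x y : V, B y x = (B x y)⁻¹ := by
    intro x y
    have h := halt (x * y)
    rw [hB] at h
    rw [map_mul, map_mul, halt x, halt y, one_mul, mul_one] at h
    exact (inv_eq_of_mul_eq_one_right h).symm
  have horder : ∀ c : C, ∃ i : ℕ, orderOf c = p ^ i := by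
    intro c
    obtain ⟨k, hk⟩ := hC c
    obtain ⟨i, _, hi⟩ := (Nat.dvd_prime_pow hp).mp (orderOf_dvd_of_pow_eq_one hk)
    exact ⟨i, hi⟩
  intro n
  induction n with
  | zero =>
    intro S hcard
    have := Nat.card_pos (α := S)
    omega
  | succ n ih =>
    intro S hcard f hf
    by_cases h0 : ∀ v ∈ S, ∀ u ∈ S, B v u = 1
    · refine ⟨1, S.one_mem, fun v hv => ?_⟩
      obtain ⟨u, hu, hfv⟩ := hf v hv
      rw [hfv, h0 v hv u hu, map_one]
    · push_neg at h0
      obtain ⟨v0, hv0, u0, hu0, hne⟩ := h0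
      obtain ⟨⟨x₁', y₁'⟩, hmax⟩ :=
        Finite.exists_max (fun q : S × S => orderOf (B (q.1 : V) (q.2 : V)))
      obtain ⟨x₁, hx₁S⟩ := x₁'
      obtain ⟨y₁, hy₁S⟩ := y₁'
      set g := B x₁ y₁ with hgdef
      have hgdvd : ∀ v ∈ S, ∀ u ∈ S, orderOf (B v u) ∣ orderOf g := by
        intro v hv u hu
        obtain ⟨i, hi⟩ := horder (B v u)
        obtain ⟨j, hj⟩ := horder g
        have hle : orderOf (B v u) ≤ orderOf g := hmax ⟨⟨v, hv⟩, ⟨u, hu⟩⟩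
        rw [hi, hj] at hle ⊢
        exact pow_dvd_pow p ((Nat.pow_le_pow_iff_right hp.one_lt).mp hle)
      have hmem : ∀ v ∈ S, ∀ u ∈ S, B v u ∈ Subgroup.zpowers g := fun v hv u hu =>
        aux_mem_zpowers_of_orderOf_dvd hcyc (hgdvd v hv u hu)
      have hgne : g ≠ 1 := by
        intro hg
        apply hne
        have := hgdvd v0 hv0 u0 hu0
        rw [hg, orderOf_one, Nat.dvd_one] at this
        exact orderOf_eq_one_iff.mp this
      -- decomposition of elements of S
      have hdec : ∀ v ∈ S, ∃ (a b : ℤ) (w : V), w ∈ S ∧ B x₁ w = 1 ∧ B y₁ w = 1 ∧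
          v = x₁ ^ a * y₁ ^ b * w := by
        intro v hv
        obtain ⟨b, hb⟩ := Subgroup.mem_zpowers_iff.mp (hmem x₁ hx₁S v hv)
        obtain ⟨c, hc⟩ := Subgroup.mem_zpowers_iff.mp (hmem y₁ hy₁S v hv)
        refine ⟨-c, b, y₁ ^ (-b) * (x₁ ^ c * v), ?_, ?_, ?_, ?_⟩
        · exact S.mul_mem (S.zpow_mem hy₁S _) (S.mul_mem (S.zpow_mem hx₁S _) hv)
        · rw [map_mul, map_mul, map_zpow, map_zpow, halt, ← hgdef, ← hb]
          group
        · rw [map_mul, map_mul, map_zpow, map_zpow, halt, hskew x₁ y₁, ← hgdef, ← hc]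
          group
        · group
      -- the subgroup W
      set W : Subgroup V := (S ⊓ (B x₁).ker) ⊓ (B y₁).ker with hWdef
      have hmemW : ∀ v : V, v ∈ W ↔ v ∈ S ∧ B x₁ v = 1 ∧ B y₁ v = 1 := by
        intro v
        simp [hWdef, Subgroup.mem_inf, MonoidHom.mem_ker, and_assoc]
      have hWS : W ≤ S := fun v hv => ((hmemW v).mp hv).1
      have hx₁W : x₁ ∉ W := by
        intro hx
        obtain ⟨-, -, h2⟩ := (hmemW x₁).mp hx
        rw [hskew y₁ x₁] at hgdef
        exact hgne (by rw [hgdef, h2]; simp)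
      have hcardW : Nat.card W ≤ n := by
        have hlt : Nat.card W < Nat.card S := by
          have hss : (W : Set V) ⊂ (S : Set V) := ⟨hWS, fun hsub => hx₁W (hsub hx₁S)⟩
          have := Set.ncard_lt_ncard hss (Set.toFinite _)
          rwa [← Nat.card_coe_set_eq, ← Nat.card_coe_set_eq, SetLike.coe_sort_coe,
            SetLike.coe_sort_coe] at this
        omega
      -- kill f on x₁ and y₁
      obtain ⟨u, huS, hu⟩ := hf x₁ hx₁S
      obtain ⟨s, hs⟩ := Subgroup.mem_zpowers_iff.mp (hu ▸ hmem x₁ hx₁S u huS)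
      set u₁ : V := y₁ ^ s with hu₁def
      have hu₁S : u₁ ∈ S := S.zpow_mem hy₁S _
      have hfx₁ : f x₁ = B x₁ u₁ := by rw [← hs, hu₁def, map_zpow, hgdef]
      set f₁ : V →* C := f * (Bl u₁)⁻¹ with hf₁def
      have hf₁app : ∀ v, f₁ v = f v * (B v u₁)⁻¹ := fun v => rfl
      have hf₁y₁ : f₁ y₁ = f y₁ := by
        rw [hf₁app, hu₁def, map_zpow, halt, one_zpow, inv_one, mul_one]
      obtain ⟨u', hu'S, hu'⟩ := hf y₁ hy₁S
      obtain ⟨t, ht⟩ := Subgroup.mem_zpowers_iff.mp (hu' ▸ hmem y₁ hy₁S u' hu'S)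
      set u₂ : V := x₁ ^ (-t) with hu₂def
      have hu₂S : u₂ ∈ S := S.zpow_mem hx₁S _
      have hf₁y₁' : f₁ y₁ = B y₁ u₂ := by
        rw [hf₁y₁, ← ht, hu₂def, map_zpow, hskew x₁ y₁, ← hgdef]
        group
      set f₂ : V →* C := f₁ * (Bl u₂)⁻¹ with hf₂def
      have hf₂app : ∀ v, f₂ v = f v * (B v u₁)⁻¹ * (B v u₂)⁻¹ := fun v => rfl
      have hf₂x₁ : f₂ x₁ = 1 := by
        have : f₂ x₁ = f₁ x₁ * (B x₁ u₂)⁻¹ := rfl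
        rw [this, hf₁app, hfx₁, mul_inv_cancel, one_mul, hu₂def, map_zpow, halt, one_zpow,
          inv_one]
      have hf₂y₁ : f₂ y₁ = 1 := by
        have : f₂ y₁ = f₁ y₁ * (B y₁ u₂)⁻¹ := rfl
        rw [this, hf₁y₁', mul_inv_cancel]
      have hf₂W : ∀ v ∈ W, ∃ u ∈ W, f₂ v = B v u := by
        intro v hvW
        have hvS := hWS hvW
        obtain ⟨-, hvx, hvy⟩ := (hmemW v).mp hvW
        obtain ⟨u', hu'S, hufv⟩ := hf v hvS
        have hz : f₂ v = B v (u' * u₁⁻¹ * u₂⁻¹) := by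
          rw [hf₂app, hufv, map_mul, map_mul, map_inv, map_inv]
        obtain ⟨a, b, w, hwS, hw1, hw2, hzw⟩ :=
          hdec (u' * u₁⁻¹ * u₂⁻¹) (S.mul_mem (S.mul_mem hu'S (S.inv_mem hu₁S)) (S.inv_mem hu₂S))
        refine ⟨w, (hmemW w).mpr ⟨hwS, hw1, hw2⟩, ?_⟩
        have hvx' : B v x₁ = 1 := by rw [hskew x₁ v, hvx, inv_one]
        have hvy' : B v y₁ = 1 := by rw [hskew y₁ v, hvy, inv_one]
        rw [hz, hzw, map_mul, map_mul, map_zpow, map_zpow, hvx', hvy', one_zpow, one_zpow,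
          one_mul, one_mul]
      obtain ⟨w', hw'W, hw'⟩ := ih W hcardW f₂ hf₂W
      obtain ⟨hw'S, hw'1, hw'2⟩ := (hmemW w').mp hw'W
      refine ⟨u₁ * u₂ * w', S.mul_mem (S.mul_mem hu₁S hu₂S) hw'S, ?_⟩
      intro v hv
      obtain ⟨a, b, w, hwS, hw1, hw2, hvw⟩ := hdec v hv
      have hwW : w ∈ W := (hmemW w).mpr ⟨hwS, hw1, hw2⟩
      have hf₂v : f₂ v = B v w' := by
        have h1 : f₂ v = f₂ w := by
          rw [hvw, map_mul, map_mul, map_zpow, map_zpow, hf₂x₁, hf₂y₁, one_zpow, one_zpow,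
            one_mul, one_mul]
        have h2 : B v w' = B w w' := by
          calc B v w' = Bl w' v := rfl
          _ = (Bl w' x₁) ^ a * (Bl w' y₁) ^ b * Bl w' w := by
              rw [hvw, map_mul, map_mul, map_zpow, map_zpow]
          _ = B w w' := by
              rw [hBl, hBl, hBl, hw'1, hw'2, one_zpow, one_zpow, one_mul, one_mul]
        rw [h1, h2, hw' w hwW]
      rw [hf₂app] at hf₂v
      have hfv : f v = B v w' * B v u₂ * B v u₁ := by
        rw [← hf₂v]; group
      rw [map_mul, map_mul, hfv]
      ac_rfl

lemma aux_card {Q C : Type*} [Group Q] [Finite Q] [CommGroup C] [Finite C]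
    (hcycC : IsCyclic C) (hC1 : 1 < Monoid.exponent C) {k : ℕ}
    (ψ : Q ≃* Multiplicative (Fin k → ZMod (Monoid.exponent C))) :
    Nat.card Q = Nat.card (Q →* C) := by
  classical
  set e := Monoid.exponent C with hedef
  haveI : NeZero e := ⟨Monoid.exponent_ne_zero_of_finite⟩
  haveI : Fact (1 < e) := ⟨hC1⟩
  have E1 : (Q →* C) ≃ (Multiplicative (Fin k → ZMod e) →* C) :=
    { toFun := fun f => f.comp ψ.symm.toMonoidHom
      invFun := fun f => f.comp ψ.toMonoidHom
      left_inv := fun f => by ext x; simp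
      right_inv := fun f => by ext x; simp }
  have E2 : (Multiplicative (Fin k → ZMod e) →* C) ≃
      (Fin k → (Multiplicative (ZMod e) →* C)) :=
    { toFun := fun f i => f.comp
        (AddMonoidHom.toMultiplicative (AddMonoidHom.single (fun _ : Fin k => ZMod e) i))
      invFun := fun v =>
        { toFun := fun x => ∏ i, v i (Multiplicative.ofAdd (Multiplicative.toAdd x i))
          map_one' := by simp
          map_mul' := by
            intro x y
            show (∏ i, v i (Multiplicative.ofAdd (Multiplicative.toAdd (x * y) i))) = _
            rw [← Finset.prod_mul_distrib]
            exact Finset.prod_congr rfl fun i _ => by rw [← map_mul]; rfl }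
      left_inv := fun f => by
        refine MonoidHom.ext fun x => ?_
        show (∏ i, f (Multiplicative.ofAdd (Pi.single i (Multiplicative.toAdd x i)))) = f x
        rw [← map_prod, ← ofAdd_sum, Finset.univ_sum_single]
        rfl
      right_inv := fun v => by
        funext i
        ext x
        show (∏ j, v j (Multiplicative.ofAdd
          ((Pi.single i (Multiplicative.toAdd x) : Fin k → ZMod e) j))) = v i x
        rw [Fintype.prod_eq_single i ?_]
        · rw [Pi.single_eq_same]; rfl
        · intro j hj
          rw [Pi.single_eq_of_ne hj]
          exact map_one (v j) }
  have E3 : (Multiplicative (ZMod e) →* C) ≃ C :=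
    { toFun := fun f => f (Multiplicative.ofAdd 1)
      invFun := fun c =>
        { toFun := fun x => c ^ (Multiplicative.toAdd x).val
          map_one' := by
            show c ^ (0 : ZMod e).val = 1
            simp [ZMod.val_zero]
          map_mul' := fun x y => by
            show c ^ (Multiplicative.toAdd x + Multiplicative.toAdd y).val = _
            rw [ZMod.val_add, ← pow_eq_pow_mod _ (Monoid.pow_exponent_eq_one c), pow_add] }
      left_inv := fun f => by
        refine MonoidHom.ext fun x => ?_
        show f (Multiplicative.ofAdd 1) ^ (Multiplicative.toAdd x).val = f x
        rw [← map_pow]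
        congr 1
        rw [← ofAdd_nsmul, nsmul_eq_mul, mul_one]
        show Multiplicative.ofAdd (((Multiplicative.toAdd x).val : ZMod e)) = x
        rw [ZMod.natCast_val, ZMod.cast_id]
        simp
      right_inv := fun c => by
        show c ^ (Multiplicative.toAdd (Multiplicative.ofAdd (1 : ZMod e))).val = c
        rw [toAdd_ofAdd, ZMod.val_one e, pow_one] }
  have hcard : Nat.card C = e := hedef ▸ IsCyclic.exponent_eq_card.symm
  calc Nat.card Q = Nat.card (Fin k → ZMod e) :=
        Nat.card_congr (ψ.toEquiv.trans Multiplicative.toAdd)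
  _ = e ^ k := by simp [Nat.card_fun]
  _ = Nat.card C ^ k := by rw [hcard]
  _ = Nat.card (Fin k → C) := by simp [Nat.card_fun]
  _ = Nat.card (Q →* C) :=
        (Nat.card_congr ((E1.trans E2).trans (Equiv.piCongrRight fun _ => E3))).symm

/-- The group of class-preserving automorphisms of `G`. -/
def autC (G : Type*) [Group G] : Subgroup (MulAut G) where
  carrier := {φ | ∀ x : G, IsConj x (φ x)}
  one_mem' := fun x => IsConj.refl x
  mul_mem' := fun {a b} ha hb x => (hb x).trans (ha (b x))
  inv_mem' := fun {a} ha x => by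
    have h := (ha ((a⁻¹ : MulAut _) x)).symm
    simpa using h

open scoped commutatorElement

/-- Let `G` be a finite p-group of nilpotency class 2 with cyclic commutator subgroup.
Then every class-preserving automorphism of `G` is inner, and moreover, whenever
additionally `Z(G) = γ₂(G)` and `G/Z(G)` is homocyclic of exponent equal to that of
`γ₂(G)`, one has `|Inn(G)| = |G/Z(G)| = |Hom(G/Z(G), γ₂(G))|`. -/
theorem stmt_19 {p : ℕ} {G : Type*} [Group G] [Finite G] (hp : p.Prime) (hpG : IsPGroup p G)
    (hcl2 : (⊤ : Subgroup G).lowerCentralSeries 1 ≠ ⊥) (hcl2' : (⊤ : Subgroup G).lowerCentralSeries 2 = ⊥)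
    (hcyc : IsCyclic (commutator G)) :
    autC G = (MulAut.conj : G →* MulAut G).range ∧
      ((Subgroup.center G = commutator G ∧
          ∃ k : ℕ, Nonempty ((G ⧸ Subgroup.center G) ≃*
            Multiplicative (Fin k → ZMod (Monoid.exponent (commutator G))))) →
        Nat.card (G ⧸ Subgroup.center G) =
          Nat.card ((G ⧸ Subgroup.center G) →* (commutator G))) := by
  constructor
  · -- Part 1 : class-preserving automorphisms are inner
    classical
    letI : CommGroup ↥(commutator G) := IsCyclic.commGroup
    -- commutator is central
    have hZ : commutator G ≤ Subgroup.center G := by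
      have h2 : (⁅commutator G, ⊤⁆ : Subgroup G) = ⊥ := hcl2'
      have h3 := Subgroup.commutator_eq_bot_iff_le_centralizer.mp h2
      rwa [Subgroup.coe_top, Subgroup.centralizer_univ] at h3
    have hmemc : ∀ x y : G, ⁅x, y⁆ ∈ commutator G := fun x y => by
      rw [commutator_def]
      exact Subgroup.commutator_mem_commutator (Subgroup.mem_top x) (Subgroup.mem_top y)
    have hcen : ∀ x y z : G, z * ⁅x, y⁆ = ⁅x, y⁆ * z := fun x y z =>
      Subgroup.mem_center_iff.mp (hZ (hmemc x y)) z
    -- bilinearity of the commutator map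
    have hmul_right : ∀ x y z : G, ⁅x, y * z⁆ = ⁅x, y⁆ * ⁅x, z⁆ := by
      intro x y z
      have e1 : ⁅x, y * z⁆ = ⁅x, y⁆ * (y * ⁅x, z⁆ * y⁻¹) := by
        simp only [commutatorElement_def]; group
      rw [e1, hcen x z y]
      group
    have hmul_left : ∀ x y z : G, ⁅x * y, z⁆ = ⁅x, z⁆ * ⁅y, z⁆ := by
      intro x y z
      have e1 : ⁅x * y, z⁆ = x * ⁅y, z⁆ * x⁻¹ * ⁅x, z⁆ := by
        simp only [commutatorElement_def]; group
      rw [e1, hcen y z x]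
      have e2 : ⁅y, z⁆ * x * x⁻¹ * ⁅x, z⁆ = ⁅y, z⁆ * ⁅x, z⁆ := by group
      rw [e2]
      exact hcen x z ⁅y, z⁆
    -- the bundled commutator bihomomorphism
    set B : G → G →* ↥(commutator G) := fun x =>
      { toFun := fun y => ⟨⁅x, y⁆, hmemc x y⟩
        map_one' := Subtype.ext (commutatorElement_one_right x)
        map_mul' := fun y z => Subtype.ext (hmul_right x y z) } with hBdef
    have hB : ∀ x y z : G, B (x * y) z = B x z * B y z := fun x y z =>
      Subtype.ext (hmul_left x y z)
    have halt : ∀ x : G, B x x = 1 := fun x => Subtype.ext (commutatorElement_self x)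
    have hB1 : ∀ z : G, B 1 z = 1 := fun z => Subtype.ext (commutatorElement_one_left z)
    apply le_antisymm
    · -- class-preserving implies inner
      intro φ hφ
      have hφ' : ∀ x : G, IsConj x (φ x) := hφ
      -- the associated homomorphism f
      have hfc : ∀ x : G, x⁻¹ * φ x ∈ commutator G := by
        intro x
        obtain ⟨c, hc⟩ := isConj_iff.mp (hφ' x)
        have : x⁻¹ * (c * x * c⁻¹) = ⁅x⁻¹, c⁆ := by rw [commutatorElement_def]; group
        rw [← hc, this]
        exact hmemc _ _
      set f : G →* ↥(commutator G) :=
        { toFun := fun x => ⟨x⁻¹ * φ x, hfc x⟩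
          map_one' := by simp
          map_mul' := by
            intro x y
            refine Subtype.ext ?_
            show (x * y)⁻¹ * φ (x * y) = (x⁻¹ * φ x) * (y⁻¹ * φ y)
            have hcen' : y⁻¹ * (x⁻¹ * φ x) = (x⁻¹ * φ x) * y⁻¹ :=
              Subgroup.mem_center_iff.mp (hZ (hfc x)) y⁻¹
            calc (x * y)⁻¹ * φ (x * y) = y⁻¹ * (x⁻¹ * φ x) * φ y := by
                  rw [map_mul]; group
            _ = (x⁻¹ * φ x) * y⁻¹ * φ y := by rw [hcen']
            _ = (x⁻¹ * φ x) * (y⁻¹ * φ y) := by group } with hfdef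
      have hf : ∀ v ∈ (⊤ : Subgroup G), ∃ u ∈ (⊤ : Subgroup G), f v = B v u := by
        intro v _
        obtain ⟨c, hc⟩ := isConj_iff.mp (hφ' v)
        refine ⟨c⁻¹, Subgroup.mem_top _, ?_⟩
        have h1 : f v = B v⁻¹ c := by
          refine Subtype.ext ?_
          show v⁻¹ * φ v = ⁅v⁻¹, c⁆
          rw [← hc, commutatorElement_def]
          group
        have h2 : B v⁻¹ c = (B v c)⁻¹ := by
          have h := hB v v⁻¹ c
          rw [mul_inv_cancel, hB1] at h
          exact (inv_eq_of_mul_eq_one_right h.symm).symm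
        rw [h1, h2, ← map_inv]
      obtain ⟨w, -, hw⟩ := aux_key hp (hpG.to_subgroup (commutator G)) hcyc B hB halt
        (Nat.card (⊤ : Subgroup G)) ⊤ le_rfl f hf
      refine ⟨w⁻¹, ?_⟩
      ext x
      show w⁻¹ * x * w⁻¹⁻¹ = φ x
      have h := congrArg Subtype.val (hw x (Subgroup.mem_top x))
      have h' : x⁻¹ * φ x = ⁅x, w⁆ := h
      have key2 : w⁻¹ * x * w = x * ⁅x, w⁆ := by
        have hc : w⁻¹ * ⁅x, w⁆ * w = ⁅x, w⁆ := by
          rw [hcen x w w⁻¹]; group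
        calc w⁻¹ * x * w = w⁻¹ * (⁅x, w⁆ * w * x) := by
              rw [commutatorElement_def]; group
        _ = (w⁻¹ * ⁅x, w⁆ * w) * x := by group
        _ = ⁅x, w⁆ * x := by rw [hc]
        _ = x * ⁅x, w⁆ := (hcen x w x).symm
      rw [inv_inv, key2, ← h']
      group
    · -- inner automorphisms are class-preserving
      rintro φ ⟨g, rfl⟩
      intro x
      exact isConj_iff.mpr ⟨g, rfl⟩

  · -- Part 2 : the cardinality statement
    rintro ⟨hZeq, k, ⟨ψ⟩⟩
    letI : CommGroup ↥(commutator G) := IsCyclic.commGroup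
    haveI hnt : Nontrivial ↥(commutator G) :=
      (Subgroup.nontrivial_iff_ne_bot (commutator G)).mpr hcl2
    exact aux_card hcyc Monoid.one_lt_exponent ψ
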